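/- Suppose there exist a unit vector u ∈ ℝ^p and a ∈ ℝ such that for i = 0,1 the conditional input law P_i gives probability one to the hyperplane { x : uᵀx = a }. Then for every s > 0, taking the trigger η = s·u, every measurable f : ℝ^p → [0,1] and every loss ℓ : [0,1]² → [0,∞) satisfy ℓ^cl(f) ≤ (1−ρ)^{-1} ℓ^poi(f) and ℓ^bd(f) ≤ ρ^{-1} ℓ^poi(f). In particular, if in addition the poisoned risk is of the same order as the clean model's risk, the backdoor attack with arbitrarily small trigger magnitude s is successful. -/

import Mathlib

open MeasureTheory
open scoped RealInnerProductSpace ENNReal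

lemma aux_integrable_of_mem_Icc {α : Type*} [MeasurableSpace α] (μ : Measure α)
    [IsFiniteMeasure μ] (g : α → ℝ) (hg : Measurable g)
    (h01 : ∀ x, g x ∈ Set.Icc (0:ℝ) 1) : Integrable g μ :=
  (integrable_const (1:ℝ)).mono' hg.aestronglyMeasurable
    (Filter.Eventually.of_forall fun x => by
      rw [Real.norm_eq_abs, abs_of_nonneg (h01 x).1]; exact (h01 x).2)

/-- Theorem 4, degenerate clean data distribution: if both
conditional input laws are supported on a hyperplane `{x : uᵀx = a}`, then for any
trigger `η = s • u` with `s > 0`, every measurable `f : ℝ^p → [0,1]` and every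
loss `ℓ : [0,1]² → [0,∞)` satisfy `ℓ^cl(f) ≤ (1-ρ)⁻¹ ℓ^poi(f)` and
`ℓ^bd(f) ≤ ρ⁻¹ ℓ^poi(f)`; so (given the ordinary-convergence-rate assumption) a
backdoor attack with arbitrarily small trigger magnitude is successful. -/
theorem degenerate_support_attack {p : ℕ} (hp : 1 ≤ p)
    (P0 P1 : Measure (EuclideanSpace ℝ (Fin p)))
    [IsProbabilityMeasure P0] [IsProbabilityMeasure P1]
    (lam ρ : ℝ) (hlam : lam ∈ Set.Ioo (0:ℝ) 1) (hρ : ρ ∈ Set.Ioo (0:ℝ) 1)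
    (u : EuclideanSpace ℝ (Fin p)) (hu : ‖u‖ = 1) (a : ℝ)
    (hP0 : P0 {x | ⟪u, x⟫ = a} = 1) (hP1 : P1 {x | ⟪u, x⟫ = a} = 1)
    (s : ℝ) (hs : 0 < s)
    (μcl μbd μpoi : Measure (EuclideanSpace ℝ (Fin p)))
    (hμcl : μcl = ENNReal.ofReal lam • P1 + ENNReal.ofReal (1 - lam) • P0)
    (hμbd : μbd = μcl.map (fun x => x + s • u))
    (hμpoi : μpoi = ENNReal.ofReal (1 - ρ) • μcl + ENNReal.ofReal ρ • μbd)
    (fcl fpoi : EuclideanSpace ℝ (Fin p) → ℝ)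
    (hfclmeas : Measurable fcl) (hfcl01 : ∀ x, fcl x ∈ Set.Icc (0:ℝ) 1)
    (hfpoimeas : Measurable fpoi) (hfpoi01 : ∀ x, fpoi x ∈ Set.Icc (0:ℝ) 1)
    (hfcl : ∀ A : Set (EuclideanSpace ℝ (Fin p)), MeasurableSet A →
      lam * (P1 A).toReal = ∫ x in A, fcl x ∂μcl)
    (hfpoi : ∀ A : Set (EuclideanSpace ℝ (Fin p)), MeasurableSet A →
      (1 - ρ) * lam * (P1 A).toReal = ∫ x in A, fpoi x ∂μpoi)
    (ℓ : ℝ → ℝ → ℝ)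
    (hℓnn : ∀ x ∈ Set.Icc (0:ℝ) 1, ∀ y ∈ Set.Icc (0:ℝ) 1, 0 ≤ ℓ x y)
    (f : EuclideanSpace ℝ (Fin p) → ℝ) (hf : Measurable f)
    (hf01 : ∀ x, f x ∈ Set.Icc (0:ℝ) 1) :
    (∫⁻ x, ENNReal.ofReal (ℓ (f x) (fcl x)) ∂μcl) ≤
        (ENNReal.ofReal (1 - ρ))⁻¹ * ∫⁻ x, ENNReal.ofReal (ℓ (f x) (fpoi x)) ∂μpoi ∧
      (∫⁻ x, ENNReal.ofReal (ℓ (f x) 0) ∂μbd) ≤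
        (ENNReal.ofReal ρ)⁻¹ * ∫⁻ x, ENNReal.ofReal (ℓ (f x) (fpoi x)) ∂μpoi := by
  obtain ⟨hl0, hl1⟩ := hlam
  obtain ⟨hr0, hr1⟩ := hρ
  set c1 := ENNReal.ofReal (1 - ρ) with hc1
  set c2 := ENNReal.ofReal ρ with hc2
  have hc1ne : c1 ≠ 0 := by
    simp only [hc1, ne_eq, ENNReal.ofReal_eq_zero, not_le]; linarith
  have hc1top : c1 ≠ ⊤ := ENNReal.ofReal_ne_top
  have hc2ne : c2 ≠ 0 := by
    simp only [hc2, ne_eq, ENNReal.ofReal_eq_zero, not_le]; linarith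
  have hc2top : c2 ≠ ⊤ := ENNReal.ofReal_ne_top
  haveI hfin_cl : IsFiniteMeasure μcl := by
    constructor
    rw [hμcl]
    simp only [Measure.add_apply, Measure.smul_apply, smul_eq_mul, measure_univ, mul_one]
    exact ENNReal.add_lt_top.mpr ⟨ENNReal.ofReal_lt_top, ENNReal.ofReal_lt_top⟩
  haveI hfin_bd : IsFiniteMeasure μbd := by rw [hμbd]; infer_instance
  haveI hfin_poi : IsFiniteMeasure μpoi := by
    constructor
    rw [hμpoi]
    simp only [Measure.add_apply, Measure.smul_apply, smul_eq_mul]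
    exact ENNReal.add_lt_top.mpr
      ⟨ENNReal.mul_lt_top hc1top.lt_top (measure_lt_top _ _),
        ENNReal.mul_lt_top hc2top.lt_top (measure_lt_top _ _)⟩
  set H : Set (EuclideanSpace ℝ (Fin p)) := {x | ⟪u, x⟫ = a} with hHdef
  set H' : Set (EuclideanSpace ℝ (Fin p)) := {x | ⟪u, x⟫ = a + s} with hH'def
  have hcont : Continuous fun x : EuclideanSpace ℝ (Fin p) => ⟪u, x⟫ :=
    continuous_const.inner continuous_id
  have hHm : MeasurableSet H := (isClosed_eq hcont continuous_const).measurableSet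
  have hH'm : MeasurableSet H' := (isClosed_eq hcont continuous_const).measurableSet
  have hshift : Measurable fun x : EuclideanSpace ℝ (Fin p) => x + s • u :=
    measurable_id.add_const _
  have hinner : ∀ x : EuclideanSpace ℝ (Fin p), ⟪u, x + s • u⟫ = ⟪u, x⟫ + s := fun x => by
    rw [inner_add_right, real_inner_smul_right, real_inner_self_eq_norm_sq, hu]; ring
  have hP1Hc : P1 Hᶜ = 0 := (prob_compl_eq_zero_iff hHm).mpr hP1
  have hP0Hc : P0 Hᶜ = 0 := (prob_compl_eq_zero_iff hHm).mpr hP0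
  have hμclHc : μcl Hᶜ = 0 := by
    rw [hμcl]
    simp [Measure.add_apply, Measure.smul_apply, hP0Hc, hP1Hc]
  have hpre : (fun x : EuclideanSpace ℝ (Fin p) => x + s • u) ⁻¹' H' = H := by
    ext x
    simp only [hHdef, hH'def, Set.mem_preimage, Set.mem_setOf_eq, hinner x]
    constructor <;> intro h <;> linarith
  have hμbdH'c : μbd H'ᶜ = 0 := by
    rw [hμbd, Measure.map_apply hshift hH'm.compl, Set.preimage_compl, hpre]
    exact hμclHc
  have hHsub : H ⊆ H'ᶜ := by
    intro x hx hx'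
    simp only [hHdef, Set.mem_setOf_eq] at hx
    simp only [hH'def, Set.mem_setOf_eq] at hx'
    linarith
  have hH'sub : H' ⊆ Hᶜ := by
    intro x hx hx'
    simp only [hH'def, Set.mem_setOf_eq] at hx
    simp only [hHdef, Set.mem_setOf_eq] at hx'
    linarith
  have hμbdH : μbd H = 0 :=
    le_antisymm ((measure_mono hHsub).trans hμbdH'c.le) zero_le
  have hμclH' : μcl H' = 0 :=
    le_antisymm ((measure_mono hH'sub).trans hμclHc.le) zero_le
  have hP1H' : P1 H' = 0 :=
    le_antisymm ((measure_mono hH'sub).trans hP1Hc.le) zero_le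
  -- integrability
  have hint_cl : Integrable fpoi μcl := aux_integrable_of_mem_Icc _ _ hfpoimeas hfpoi01
  have hint_bd : Integrable fpoi μbd := aux_integrable_of_mem_Icc _ _ hfpoimeas hfpoi01
  have hint_fcl : Integrable fcl μcl := aux_integrable_of_mem_Icc _ _ hfclmeas hfcl01
  -- splitting of set integrals over μpoi
  have hsplit : ∀ A : Set (EuclideanSpace ℝ (Fin p)), MeasurableSet A →
      ∫ x in A, fpoi x ∂μpoi
        = (1 - ρ) * ∫ x in A, fpoi x ∂μcl + ρ * ∫ x in A, fpoi x ∂μbd := by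
    intro A hA
    rw [hμpoi, Measure.restrict_add, Measure.restrict_smul, Measure.restrict_smul,
      integral_add_measure (hint_cl.integrableOn.smul_measure hc1top)
        (hint_bd.integrableOn.smul_measure hc2top),
      integral_smul_measure, integral_smul_measure, hc1, hc2,
      ENNReal.toReal_ofReal (by linarith), ENNReal.toReal_ofReal (by linarith)]
    simp only [smul_eq_mul]
  -- fpoi agrees a.e. with fcl under μcl
  have haeH : ∀ A : Set (EuclideanSpace ℝ (Fin p)), A =ᵐ[μcl] ((A ∩ H : Set (EuclideanSpace ℝ (Fin p)))) := by
    intro A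
    rw [MeasureTheory.ae_eq_set]
    constructor
    · refine le_antisymm (le_trans (measure_mono ?_) hμclHc.le) zero_le
      intro x hx
      exact fun hxH => hx.2 ⟨hx.1, hxH⟩
    · simp [Set.diff_eq_empty.mpr Set.inter_subset_left]
  have haeH' : ∀ A : Set (EuclideanSpace ℝ (Fin p)), A =ᵐ[μbd] ((A ∩ H' : Set (EuclideanSpace ℝ (Fin p)))) := by
    intro A
    rw [MeasureTheory.ae_eq_set]
    constructor
    · refine le_antisymm (le_trans (measure_mono ?_) hμbdH'c.le) zero_le
      intro x hx
      exact fun hxH => hx.2 ⟨hx.1, hxH⟩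
    · simp [Set.diff_eq_empty.mpr Set.inter_subset_left]
  have hae_cl : fpoi =ᵐ[μcl] fcl := by
    refine Integrable.ae_eq_of_forall_setIntegral_eq _ _ hint_cl hint_fcl fun A hA _ => ?_
    rw [setIntegral_congr_set (haeH A), setIntegral_congr_set (haeH A)]
    have hAHm := hA.inter hHm
    have h1 := hfpoi (A ∩ H) hAHm
    have h2 := hfcl (A ∩ H) hAHm
    have h3 := hsplit (A ∩ H) hAHm
    have hbd0 : μbd (A ∩ H) = 0 :=
      le_antisymm ((measure_mono Set.inter_subset_right).trans hμbdH.le) zero_le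
    rw [setIntegral_measure_zero _ hbd0, mul_zero, add_zero] at h3
    have h5 : (1 - ρ) * (lam * (P1 (A ∩ H)).toReal)
        = (1 - ρ) * ∫ x in A ∩ H, fpoi x ∂μcl := by
      rw [← mul_assoc, h1, h3]
    have h6 := mul_left_cancel₀ (by linarith : (1 - ρ) ≠ 0) h5
    exact h6.symm.trans h2
  have hae_bd : fpoi =ᵐ[μbd] 0 := by
    refine hint_bd.ae_eq_zero_of_forall_setIntegral_eq_zero fun A hA _ => ?_
    rw [setIntegral_congr_set (haeH' A)]
    have hAHm := hA.inter hH'm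
    have h1 := hfpoi (A ∩ H') hAHm
    have h3 := hsplit (A ∩ H') hAHm
    have hcl0 : μcl (A ∩ H') = 0 :=
      le_antisymm ((measure_mono Set.inter_subset_right).trans hμclH'.le) zero_le
    have hP10 : P1 (A ∩ H') = 0 :=
      le_antisymm ((measure_mono Set.inter_subset_right).trans hP1H'.le) zero_le
    rw [setIntegral_measure_zero _ hcl0, mul_zero, zero_add] at h3
    rw [hP10] at h1
    simp only [ENNReal.toReal_zero, mul_zero] at h1
    have : ρ * ∫ x in A ∩ H', fpoi x ∂μbd = 0 := by rw [← h3, ← h1]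
    exact (mul_eq_zero.mp this).resolve_left (by linarith)
  -- congruence of lintegrals
  have hcong1 : ∫⁻ x, ENNReal.ofReal (ℓ (f x) (fpoi x)) ∂μcl
      = ∫⁻ x, ENNReal.ofReal (ℓ (f x) (fcl x)) ∂μcl :=
    lintegral_congr_ae (hae_cl.mono fun x hx => by simp [hx])
  have hcong2 : ∫⁻ x, ENNReal.ofReal (ℓ (f x) (fpoi x)) ∂μbd
      = ∫⁻ x, ENNReal.ofReal (ℓ (f x) 0) ∂μbd :=
    lintegral_congr_ae (hae_bd.mono fun x hx => by simp only [Pi.zero_apply] at hx; simp [hx])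
  have hpoi_split : ∫⁻ x, ENNReal.ofReal (ℓ (f x) (fpoi x)) ∂μpoi
      = c1 * ∫⁻ x, ENNReal.ofReal (ℓ (f x) (fcl x)) ∂μcl
        + c2 * ∫⁻ x, ENNReal.ofReal (ℓ (f x) 0) ∂μbd := by
    rw [hμpoi, lintegral_add_measure, lintegral_smul_measure, lintegral_smul_measure,
      hcong1, hcong2]
    simp only [smul_eq_mul]
  constructor
  · calc ∫⁻ x, ENNReal.ofReal (ℓ (f x) (fcl x)) ∂μcl
        = c1⁻¹ * (c1 * ∫⁻ x, ENNReal.ofReal (ℓ (f x) (fcl x)) ∂μcl) := by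
          rw [← mul_assoc, ENNReal.inv_mul_cancel hc1ne hc1top, one_mul]
    _ ≤ c1⁻¹ * ∫⁻ x, ENNReal.ofReal (ℓ (f x) (fpoi x)) ∂μpoi := by
          refine mul_le_mul_right ?_ _
          rw [hpoi_split]
          exact le_self_add
  · calc ∫⁻ x, ENNReal.ofReal (ℓ (f x) 0) ∂μbd
        = c2⁻¹ * (c2 * ∫⁻ x, ENNReal.ofReal (ℓ (f x) 0) ∂μbd) := by
          rw [← mul_assoc, ENNReal.inv_mul_cancel hc2ne hc2top, one_mul]
    _ ≤ c2⁻¹ * ∫⁻ x, ENNReal.ofReal (ℓ (f x) (fpoi x)) ∂μpoi := by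
          refine mul_le_mul_right ?_ _
          rw [hpoi_split]
          exact le_add_self
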